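/- Let W be an N×N real matrix with nonnegative entries and zero diagonal, let D = diag(d_1,...,d_N) with d_i = Σ_j w_{ij}, and let L = D − W. Suppose the associated digraph (which has an edge from node j to node i exactly when w_{ij} > 0) contains a spanning tree, i.e., there exists a root node r such that every other node can be reached from r along directed edges. Then: (i) 0 is an eigenvalue of L with the all-ones vector 1_N as an associated eigenvector; (ii) 0 is a simple root of the characteristic polynomial of L; and (iii) every other complex eigenvalue of L has strictly positive real part. -/

import Mathlib

open Matrix Polynomial


/-- propagation: at a maximizer, in-neighbors are also maximizers; conclude `u i ≤ u r`. -/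
lemma lap_max_le (N : ℕ) (W : Matrix (Fin N) (Fin N) ℝ) (hW : ∀ i j, 0 ≤ W i j)
    (u : Fin N → ℝ) (hu : ∀ i, (∑ j, W i j) * u i = ∑ j, W i j * u j)
    (r : Fin N) (hr : ∀ i, Relation.ReflTransGen (fun a b => 0 < W b a) r i)
    (i : Fin N) : u i ≤ u r := by
  have hne : (Finset.univ : Finset (Fin N)).Nonempty := ⟨r, Finset.mem_univ r⟩
  obtain ⟨i0, -, hmax⟩ := Finset.exists_max_image Finset.univ u hne
  have hmax' : ∀ j, u j ≤ u i0 := fun j => hmax j (Finset.mem_univ j)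
  have key : ∀ a, u a = u i0 → ∀ j, 0 < W a j → u j = u i0 := by
    intro a ha j hj
    have hsum : ∑ k, W a k * (u i0 - u k) = 0 := by
      have := hu a
      simp only [mul_sub, Finset.sum_sub_distrib, ← Finset.sum_mul]
      rw [← ha]
      linarith [hu a]
    have hterm : ∀ k ∈ Finset.univ, 0 ≤ W a k * (u i0 - u k) := by
      intro k _
      exact mul_nonneg (hW a k) (by linarith [hmax' k])
    have := (Finset.sum_eq_zero_iff_of_nonneg hterm).mp hsum j (Finset.mem_univ j)
    have h2 : u i0 - u j = 0 := by
      rcases mul_eq_zero.mp this with h | h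
      · exact absurd h (ne_of_gt hj)
      · exact h
    linarith
  have hroot : u r = u i0 := by
    have : ∀ b, Relation.ReflTransGen (fun a b => 0 < W b a) r b → u b = u i0 → u r = u i0 := by
      intro b hb
      induction hb with
      | refl => exact id
      | tail h1 h2 ih => intro hc; exact ih (key _ hc _ h2)
    exact this i0 (hr i0) rfl
  rw [hroot]; exact hmax' i

/-- if `L u` is constant `c`, then `c = 0` (max/min argument, no tree needed) -/
lemma lap_const_zero (N : ℕ) (hN : 1 ≤ N) (W : Matrix (Fin N) (Fin N) ℝ)
    (hW : ∀ i j, 0 ≤ W i j) (u : Fin N → ℝ) (c : ℝ)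
    (hu : ∀ i, (∑ j, W i j) * u i - ∑ j, W i j * u j = c) : c = 0 := by
  have hne : (Finset.univ : Finset (Fin N)).Nonempty := ⟨⟨0, hN⟩, Finset.mem_univ _⟩
  obtain ⟨i0, -, hmax⟩ := Finset.exists_max_image Finset.univ u hne
  obtain ⟨i1, -, hmin⟩ := Finset.exists_min_image Finset.univ u hne
  have h0 : 0 ≤ c := by
    rw [← hu i0]
    have : ∑ j, W i0 j * u j ≤ ∑ j, W i0 j * u i0 :=
      Finset.sum_le_sum fun j _ => mul_le_mul_of_nonneg_left (hmax j (Finset.mem_univ j)) (hW i0 j)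
    rw [← Finset.sum_mul] at this
    linarith
  have h1 : c ≤ 0 := by
    rw [← hu i1]
    have : ∑ j, W i1 j * u i1 ≤ ∑ j, W i1 j * u j :=
      Finset.sum_le_sum fun j _ => mul_le_mul_of_nonneg_left (hmin j (Finset.mem_univ j)) (hW i1 j)
    rw [← Finset.sum_mul] at this
    linarith
  linarith

lemma lap_complex_eq (N : ℕ) (W : Matrix (Fin N) (Fin N) ℝ)
    (L : Matrix (Fin N) (Fin N) ℝ)
    (hL : L = Matrix.diagonal (fun i => ∑ j, W i j) - W)
    (x y : Fin N → ℂ) (hmv : (L.map (Complex.ofReal ·)).mulVec x = y) (i : Fin N) :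
    ((∑ j, W i j : ℝ) : ℂ) * x i - ∑ j, ((W i j : ℝ) : ℂ) * x j = y i := by
  have h := congrFun hmv i
  simp only [Matrix.mulVec, dotProduct, Matrix.map_apply, hL, Matrix.sub_apply,
    Matrix.diagonal, Matrix.of_apply, Complex.ofReal_sub] at h
  rw [← h]
  simp [sub_mul, Finset.sum_sub_distrib, ite_mul, Finset.sum_ite_eq, apply_ite]

lemma lap_re_eq (N : ℕ) (W : Matrix (Fin N) (Fin N) ℝ)
    (L : Matrix (Fin N) (Fin N) ℝ)
    (hL : L = Matrix.diagonal (fun i => ∑ j, W i j) - W)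
    (x y : Fin N → ℂ) (hmv : (L.map (Complex.ofReal ·)).mulVec x = y) (i : Fin N) :
    (∑ j, W i j) * (x i).re - ∑ j, W i j * (x j).re = (y i).re ∧
    (∑ j, W i j) * (x i).im - ∑ j, W i j * (x j).im = (y i).im := by
  have h := lap_complex_eq N W L hL x y hmv i
  constructor
  · have := congrArg Complex.re h
    simpa [Complex.re_sum, Complex.mul_re] using this
  · have := congrArg Complex.im h
    simpa [Complex.im_sum, Complex.mul_im] using this

lemma lap_ker_const (N : ℕ) (W : Matrix (Fin N) (Fin N) ℝ) (hW : ∀ i j, 0 ≤ W i j)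
    (L : Matrix (Fin N) (Fin N) ℝ)
    (hL : L = Matrix.diagonal (fun i => ∑ j, W i j) - W)
    (r : Fin N) (hr : ∀ i, Relation.ReflTransGen (fun a b => 0 < W b a) r i)
    (x : Fin N → ℂ) (hmv : (L.map (Complex.ofReal ·)).mulVec x = 0) (i : Fin N) :
    x i = x r := by
  have h := fun i => lap_re_eq N W L hL x 0 hmv i
  have hre : ∀ i, (∑ j, W i j) * (x i).re = ∑ j, W i j * (x j).re := by
    intro i; have := (h i).1; simp at this; linarith
  have him : ∀ i, (∑ j, W i j) * (x i).im = ∑ j, W i j * (x j).im := by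
    intro i; have := (h i).2; simp at this; linarith
  have hneg : ∀ (u : Fin N → ℝ), (∀ i, (∑ j, W i j) * u i = ∑ j, W i j * u j) →
      ∀ i, u i = u r := by
    intro u hu i
    have h1 := lap_max_le N W hW u hu r hr i
    have h2 := lap_max_le N W hW (fun j => -u j) (by
      intro a
      simp only [mul_neg, Finset.sum_neg_distrib, ← hu a]) r hr i
    simp at h2
    linarith
  exact Complex.ext (hneg _ hre i) (hneg _ him i)

lemma eval_charpoly_aux {n : Type*} [Fintype n] [DecidableEq n] {R : Type*} [CommRing R]
    (A : Matrix n n R) (t : R) :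
    (A.charpoly).eval t = (Matrix.diagonal (fun _ => t) - A).det := by
  rw [Matrix.charpoly, ← Polynomial.coe_evalRingHom, RingHom.map_det]
  congr 1
  ext i j
  by_cases h : i = j <;>
  simp [h, Matrix.charmatrix_apply, Matrix.diagonal]


/-- Let `W` be an `N×N` real matrix with nonnegative entries and zero
diagonal, `D` the diagonal matrix of row sums, and `L = D - W` the Laplacian.  If the
associated digraph (with an edge from node `j` to node `i` exactly when `W i j > 0`)
has a spanning tree (some root `r` reaches every node along directed edges), then:
(i) `0` is an eigenvalue of `L` with the all-ones vector as eigenvector;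
(ii) `0` is a simple root of the characteristic polynomial of `L` (over `ℂ`);
(iii) every other complex eigenvalue of `L` has strictly positive real part. -/
theorem laplacian_spanning_tree_spectrum
    (N : ℕ) (hN : 1 ≤ N)
    (W : Matrix (Fin N) (Fin N) ℝ)
    (hW_nonneg : ∀ i j, 0 ≤ W i j)
    (hW_diag : ∀ i, W i i = 0)
    (L : Matrix (Fin N) (Fin N) ℝ)
    (hL : L = Matrix.diagonal (fun i => ∑ j, W i j) - W)
    (htree : ∃ r : Fin N, ∀ i : Fin N,
      Relation.ReflTransGen (fun a b => 0 < W b a) r i) :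
    L.mulVec (fun _ => (1 : ℝ)) = 0 ∧
    ((L.map (Complex.ofReal ·)).charpoly).rootMultiplicity 0 = 1 ∧
    (∀ μ : ℂ, ((L.map (Complex.ofReal ·)).charpoly).IsRoot μ → μ ≠ 0 → 0 < μ.re) := by
  obtain ⟨r, hr⟩ := htree
  set A : Matrix (Fin N) (Fin N) ℂ := L.map (Complex.ofReal ·) with hA
  -- part (i)
  have h1 : L.mulVec (fun _ => (1 : ℝ)) = 0 := by
    funext i
    simp [hL, Matrix.sub_mulVec, Matrix.mulVec, dotProduct, Matrix.diagonal,
      Finset.sum_ite_eq]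
  refine ⟨h1, ?_, ?_⟩
  · -- part (ii)
    set ones : Fin N → ℂ := fun _ => 1 with hones
    have hones0 : A.mulVec ones = 0 := by
      funext i
      have hrow : ∑ j, L i j = 0 := by
        have := congrFun h1 i
        simpa [Matrix.mulVec, dotProduct] using this
      simp only [hA, Matrix.mulVec, dotProduct, Matrix.map_apply, hones, mul_one,
        Pi.zero_apply]
      rw [← Complex.ofReal_sum, hrow, Complex.ofReal_zero]
    have hker : ∀ x : Fin N → ℂ, A.mulVec x = 0 → x = (x r) • ones := by
      intro x hx
      funext i
      simpa [hones] using lap_ker_const N W hW_nonneg L hL r hr x hx i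
    have hker2 : ∀ x : Fin N → ℂ, A.mulVec (A.mulVec x) = 0 → A.mulVec x = 0 := by
      intro x hx
      set y := A.mulVec x with hy
      have hyc : ∀ i, y i = y r := fun i => lap_ker_const N W hW_nonneg L hL r hr y hx i
      have hre := fun i => (lap_re_eq N W L hL x y hy.symm i).1
      have him := fun i => (lap_re_eq N W L hL x y hy.symm i).2
      have hcre : (y r).re = 0 := by
        refine lap_const_zero N hN W hW_nonneg (fun i => (x i).re) _ (fun i => ?_)
        rw [hre i, (congrArg Complex.re (hyc i))]
      have hcim : (y r).im = 0 := by
        refine lap_const_zero N hN W hW_nonneg (fun i => (x i).im) _ (fun i => ?_)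
        rw [him i, (congrArg Complex.im (hyc i))]
      funext i
      rw [Pi.zero_apply, hyc i]
      exact Complex.ext hcre hcim
    set φ : Module.End ℂ (Fin N → ℂ) := Matrix.toLin' A with hφ
    have hφap : ∀ x, φ x = A.mulVec x := fun x => Matrix.toLin'_apply A x
    have honesne : ones ≠ 0 := by
      intro h
      have := congrFun h ⟨0, hN⟩
      simp [hones] at this
    have hkerφ : LinearMap.ker φ = Submodule.span ℂ {ones} := by
      apply le_antisymm
      · intro x hx
        rw [LinearMap.mem_ker, hφap] at hx
        rw [hker x hx]
        exact Submodule.smul_mem _ _ (Submodule.mem_span_singleton_self _)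
      · rw [Submodule.span_le, Set.singleton_subset_iff]
        rw [SetLike.mem_coe, LinearMap.mem_ker, hφap]
        exact hones0
    have hpow : ∀ (k : ℕ) (x : Fin N → ℂ), (φ ^ (k + 1)) x = 0 → φ x = 0 := by
      intro k
      induction k with
      | zero => intro x hx; simpa using hx
      | succ k ih =>
        intro x hx
        have h2 : (φ ^ (k + 1)) (φ x) = 0 := by
          rw [← Module.End.mul_apply, ← pow_succ]
          exact hx
        have h3 : φ (φ x) = 0 := ih (φ x) h2
        rw [hφap, hφap] at h3
        rw [hφap]
        exact hker2 x h3
    have hmaxgen : φ.maxGenEigenspace 0 = LinearMap.ker φ := by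
      ext x
      rw [Module.End.mem_maxGenEigenspace, LinearMap.mem_ker]
      simp only [zero_smul, sub_zero]
      constructor
      · rintro ⟨k, hk⟩
        cases k with
        | zero => simp only [pow_zero, Module.End.one_apply] at hk; rw [hk]; exact map_zero φ
        | succ k => exact hpow k x hk
      · intro hx
        exact ⟨1, by simpa using hx⟩
    have hchar : A.charpoly = φ.charpoly := by
      rw [← LinearMap.charpoly_toMatrix φ (Pi.basisFun ℂ (Fin N)),
        LinearMap.toMatrix_eq_toMatrix', hφ, LinearMap.toMatrix'_toLin']
    rw [Polynomial.rootMultiplicity_eq_natTrailingDegree', hchar,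
      ← LinearMap.finrank_maxGenEigenspace_zero_eq, hmaxgen, hkerφ,
      finrank_span_singleton honesne]
  · -- part (iii)
    intro μ hroot hμne
    have hdet : (Matrix.diagonal (fun _ => μ) - A).det = 0 := by
      rw [← eval_charpoly_aux]; exact hroot
    obtain ⟨v, hvne, hv0⟩ := (Matrix.exists_mulVec_eq_zero_iff).mpr hdet
    have hvev : A.mulVec v = μ • v := by
      rw [Matrix.sub_mulVec, sub_eq_zero] at hv0
      rw [← hv0]
      funext i
      simp [Matrix.mulVec_diagonal]
    have hev : Module.End.HasEigenvalue (Matrix.toLin' A) μ := by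
      refine Module.End.hasEigenvalue_of_hasEigenvector ⟨?_, hvne⟩
      rw [Module.End.mem_eigenspace_iff, Matrix.toLin'_apply, hvev]
    obtain ⟨k, hk⟩ := eigenvalue_mem_ball hev
    set c : ℝ := ∑ j, W k j with hc
    have hc0 : 0 ≤ c := Finset.sum_nonneg fun j _ => hW_nonneg k j
    have hAkk : A k k = (c : ℂ) := by
      simp [hA, hL, Matrix.diagonal, hW_diag k, hc]
    have hsum : ∑ j ∈ Finset.univ.erase k, ‖A k j‖ = c := by
      have heq : ∀ j ∈ Finset.univ.erase k, ‖A k j‖ = W k j := by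
        intro j hj
        have hjk : ¬ (k = j) := fun h => (Finset.ne_of_mem_erase hj) h.symm
        simp [hA, hL, Matrix.diagonal, hjk, abs_of_nonneg (hW_nonneg k j)]
      rw [Finset.sum_congr rfl heq, Finset.sum_erase_eq_sub (Finset.mem_univ k), hW_diag k,
        ← hc, sub_zero]
    rw [hAkk, hsum, Metric.mem_closedBall, Complex.dist_eq] at hk
    have hsq : Complex.normSq (μ - (c : ℂ)) ≤ c ^ 2 := by
      rw [← Complex.sq_norm]
      have := norm_nonneg (μ - (c : ℂ))
      nlinarith
    have hnsq : 0 < Complex.normSq μ := Complex.normSq_pos.mpr hμne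
    rw [Complex.normSq_apply] at hnsq
    rw [Complex.normSq_apply] at hsq
    simp only [Complex.sub_re, Complex.sub_im, Complex.ofReal_re, Complex.ofReal_im,
      sub_zero] at hsq
    by_contra hre
    push_neg at hre
    have : c * μ.re ≤ 0 := mul_nonpos_of_nonneg_of_nonpos hc0 hre
    nlinarith
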